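/- Let G = (V, A, g) be a finite directed graph with gain function g and battery capacity B > 0, and let x, y, z ∈ V. Suppose there is a walk P from x to y whose induced path is monotone with respect to a charge drop schedule C_1, and a walk Q from y to z whose induced path is monotone with respect to a charge drop schedule C_2 with g^{C_2}(Q) ≥ 0 and g^{C_1}(P) + g^{C_2}(Q) ≥ 0. Then there exists a walk W from x to z with α_B(W) = B: starting at x with a full battery, the car can reach z with a full battery. -/
import Mathlib


open Finset

namespace EV

noncomputable section

/-- Charge after traversing `i` arcs of a path with arc gains `g`, battery capacity `B`,
initial charge `b`. -/
def charge (B b : ℝ) (g : ℕ → ℝ) : ℕ → ℝ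
  | 0 => b
  | i + 1 => min (charge B b g i + g i) B

/-- The traversal of the path with `n` arcs is feasible from initial charge `b`. -/
def Feasible (B b : ℝ) (g : ℕ → ℝ) (n : ℕ) : Prop :=
  ∀ i < n, 0 ≤ charge B b g i + g i

open Classical in
/-- Maximum final charge `α_b(P)` for a path `P` with `n` arc gains `g`,
as an extended real (`⊥ = -∞` if the traversal is infeasible). -/
def alpha (B b : ℝ) (g : ℕ → ℝ) (n : ℕ) : EReal :=
  if Feasible B b g n then ((charge B b g n : ℝ) : EReal) else ⊥

/-- Gain of the `i`-th vertex (0-indexed): the sum of the first `i` arc gains. -/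
def vGain (g : ℕ → ℝ) (i : ℕ) : ℝ := ∑ t ∈ Finset.range i, g t

/-- `P` is traversable: `α_B(P) ≥ 0`, i.e. feasible from a full battery. -/
def Traversable (B : ℝ) (g : ℕ → ℝ) (n : ℕ) : Prop := Feasible B B g n

/-- `C` is a charge drop schedule for a path with `n` arcs (vertices `0,…,n`):
no drop at the first vertex, all drops nonnegative. -/
def Schedule (C : ℕ → ℝ) (n : ℕ) : Prop := C 0 = 0 ∧ ∀ i ≤ n, 0 ≤ C i

/-- Gain of vertex `i` with respect to the charge drop schedule `C`. -/
def cGain (g C : ℕ → ℝ) (i : ℕ) : ℝ := vGain g i - ∑ t ∈ Finset.range (i + 1), C t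

/-- `P` (with `n` arcs) is ascending with respect to the schedule `C`. -/
def AscendingC (B : ℝ) (g C : ℕ → ℝ) (n : ℕ) : Prop :=
  Traversable B g n ∧ ∀ i ≤ n, 0 ≤ cGain g C i ∧ cGain g C i ≤ cGain g C n

/-- `P` (with `n` arcs) is descending with respect to the schedule `C`. -/
def DescendingC (B : ℝ) (g C : ℕ → ℝ) (n : ℕ) : Prop :=
  Traversable B g n ∧ ∀ i ≤ n, cGain g C n ≤ cGain g C i ∧ cGain g C i ≤ 0

/-- `P` is monotone with respect to the schedule `C`. -/
def MonotoneC (B : ℝ) (g C : ℕ → ℝ) (n : ℕ) : Prop :=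
  AscendingC B g C n ∨ DescendingC B g C n

/-- Ascending with respect to the zero schedule. -/
def Ascending (B : ℝ) (g : ℕ → ℝ) (n : ℕ) : Prop := AscendingC B g (fun _ => 0) n

/-- Descending with respect to the zero schedule. -/
def Descending (B : ℝ) (g : ℕ → ℝ) (n : ℕ) : Prop := DescendingC B g (fun _ => 0) n

/-- Monotone with respect to the zero schedule. -/
def MonotonePath (B : ℝ) (g : ℕ → ℝ) (n : ℕ) : Prop := Ascending B g n ∨ Descending B g n

/-- The contiguous subpath whose arcs start at arc index `a`. -/
def SubPath (g : ℕ → ℝ) (a : ℕ) : ℕ → ℝ := fun t => g (a + t)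

/-- Restriction of a charge drop schedule to the subpath starting at vertex `a`:
no drop at the subpath's first vertex. -/
def restrict (C : ℕ → ℝ) (a : ℕ) : ℕ → ℝ := fun t => if t = 0 then 0 else C (a + t)

/-- First-arc-bounded with respect to a schedule `C` (no drop at the second vertex,
and all vertex gains lie between the gains of the first two vertices). -/
def FirstArcBoundedC (g C : ℕ → ℝ) (n : ℕ) : Prop :=
  C 1 = 0 ∧
    ((0 ≤ g 0 ∧ ∀ i ≤ n, 0 ≤ cGain g C i ∧ cGain g C i ≤ g 0) ∨
     (g 0 ≤ 0 ∧ ∀ i ≤ n, g 0 ≤ cGain g C i ∧ cGain g C i ≤ 0))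

/-- Last-arc-bounded with respect to a schedule `C` (no drops at the last two vertices,
and all vertex gains lie between the gains of the last two vertices). -/
def LastArcBoundedC (g C : ℕ → ℝ) (n : ℕ) : Prop :=
  C (n - 1) = 0 ∧ C n = 0 ∧
    ((0 ≤ g (n - 1) ∧ ∀ i ≤ n, cGain g C (n - 1) ≤ cGain g C i ∧ cGain g C i ≤ cGain g C n) ∨
     (g (n - 1) < 0 ∧ ∀ i ≤ n, cGain g C n ≤ cGain g C i ∧ cGain g C i ≤ cGain g C (n - 1)))

/-- First-arc-bounded (zero schedule). -/
def FirstArcBounded (g : ℕ → ℝ) (n : ℕ) : Prop := FirstArcBoundedC g (fun _ => 0) n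

/-- Last-arc-bounded (zero schedule). -/
def LastArcBounded (g : ℕ → ℝ) (n : ℕ) : Prop := LastArcBoundedC g (fun _ => 0) n

/-- Arc-bounded: first- or last-arc-bounded. -/
def ArcBounded (g : ℕ → ℝ) (n : ℕ) : Prop := FirstArcBounded g n ∨ LastArcBounded g n

/-- A funnel: arc-bounded and containing no monotone subpath of 2 or 3 consecutive arcs. -/
def Funnel (B : ℝ) (g : ℕ → ℝ) (n : ℕ) : Prop :=
  ArcBounded g n ∧ ∀ a m, (m = 2 ∨ m = 3) → a + m ≤ n → ¬ MonotonePath B (SubPath g a) m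

/-- `j = s̄(i)`: the maximal index `j ≥ i` (among arcs of a path with `n` arcs) such that
the subpath of arcs `i,…,j` is first-arc-bounded. -/
def IsSbar (g : ℕ → ℝ) (n i j : ℕ) : Prop :=
  i ≤ j ∧ j < n ∧ FirstArcBounded (SubPath g i) (j - i + 1) ∧
    ∀ j', i ≤ j' → j' < n → FirstArcBounded (SubPath g i) (j' - i + 1) → j' ≤ j

/-- `j = s̲(i)`: the minimal index `j ≤ i` such that the subpath of arcs `j,…,i`
is last-arc-bounded. -/
def IsSlow (g : ℕ → ℝ) (n i j : ℕ) : Prop :=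
  j ≤ i ∧ i < n ∧ LastArcBounded (SubPath g j) (i - j + 1) ∧
    ∀ j', j' ≤ i → LastArcBounded (SubPath g j') (i - j' + 1) → j ≤ j'

/-- Arc gains of the walk around a cycle with `m` arc gains `g`, starting at vertex `a`. -/
def cyc (g : ℕ → ℝ) (m a : ℕ) : ℕ → ℝ := fun t => g ((a + t) % m)

/-- A walk of length `ℓ` from `x` to `y` in the directed graph with arc relation `A`. -/
def IsWalk {V : Type*} (A : V → V → Prop) (w : ℕ → V) (ℓ : ℕ) (x y : V) : Prop :=
  w 0 = x ∧ w ℓ = y ∧ ∀ t < ℓ, A (w t) (w (t + 1))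

/-- The sequence of arc gains induced by a walk `w` in a graph with gain function `g`. -/
def walkGains {V : Type*} (g : V → V → ℝ) (w : ℕ → V) : ℕ → ℝ :=
  fun t => g (w t) (w (t + 1))

/-! ### Auxiliary lemmas -/

lemma vGain_zero (g : ℕ → ℝ) : vGain g 0 = 0 := by simp [vGain]

lemma vGain_succ (g : ℕ → ℝ) (i : ℕ) : vGain g (i + 1) = vGain g i + g i := by
  simp [vGain, Finset.sum_range_succ]

lemma charge_le {B b : ℝ} {g : ℕ → ℝ} (hb : b ≤ B) : ∀ i, charge B b g i ≤ B
  | 0 => hb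
  | (i + 1) => min_le_right _ _

lemma charge_congr {B b : ℝ} {g g' : ℕ → ℝ} :
    ∀ i, (∀ t, t < i → g t = g' t) → charge B b g i = charge B b g' i
  | 0, _ => rfl
  | (i + 1), h => by
      show min (charge B b g i + g i) B = min (charge B b g' i + g' i) B
      rw [charge_congr i (fun t ht => h t (ht.trans (Nat.lt_succ_self i))),
        h i (Nat.lt_succ_self i)]

lemma charge_add {B b : ℝ} {g : ℕ → ℝ} (a : ℕ) :
    ∀ s, charge B b g (a + s) = charge B (charge B b g a) (fun t => g (a + t)) s
  | 0 => rfl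
  | (s + 1) => by
      show min (charge B b g (a + s) + g (a + s)) B
          = min (charge B (charge B b g a) (fun t => g (a + t)) s + g (a + s)) B
      rw [charge_add a s]

lemma charge_nonneg {B b : ℝ} {g : ℕ → ℝ} {n : ℕ} (hB : 0 ≤ B) (hb : 0 ≤ b)
    (hf : Feasible B b g n) : ∀ i, i ≤ n → 0 ≤ charge B b g i
  | 0, _ => hb
  | (i + 1), h => le_min (hf i (Nat.lt_of_succ_le h)) hB

lemma charge_lower {B b D : ℝ} {g : ℕ → ℝ} {n : ℕ} (hb : b ≤ B)
    (hD : ∀ j, 1 ≤ j → j ≤ n → vGain g j ≤ D) :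
    ∀ s, s ≤ n → min (b + vGain g s) (B + vGain g s - D) ≤ charge B b g s
  | 0, _ => by
      rw [vGain_zero]
      exact (min_le_left _ _).trans (by simp [charge])
  | (s + 1), hs => by
      have ih := charge_lower hb hD s (Nat.le_of_succ_le hs)
      have hVs : vGain g (s + 1) = vGain g s + g s := vGain_succ g s
      have h2 : min (b + vGain g (s + 1)) (B + vGain g (s + 1) - D) ≤ B := by
        have := hD (s + 1) (Nat.succ_le_succ (Nat.zero_le s)) hs
        have := min_le_right (b + vGain g (s + 1)) (B + vGain g (s + 1) - D)
        linarith
      have h1 : min (b + vGain g (s + 1)) (B + vGain g (s + 1) - D)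
          ≤ charge B b g s + g s := by
        rcases min_cases (b + vGain g s) (B + vGain g s - D) with ⟨he, _⟩ | ⟨he, _⟩ <;>
          rw [he] at ih
        · have := min_le_left (b + vGain g (s + 1)) (B + vGain g (s + 1) - D)
          linarith
        · have := min_le_right (b + vGain g (s + 1)) (B + vGain g (s + 1) - D)
          linarith
      exact le_min h1 h2

lemma charge_mono_init {B b : ℝ} {g : ℕ → ℝ} (hb : b ≤ B) :
    ∀ s, min (b + vGain g s) (charge B B g s) ≤ charge B b g s
  | 0 => by
      rw [vGain_zero]
      exact (min_le_left _ _).trans (by simp [charge])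
  | (s + 1) => by
      have ih := charge_mono_init (g := g) hb s
      have hVs : vGain g (s + 1) = vGain g s + g s := vGain_succ g s
      refine le_min ?_ ((min_le_right _ _).trans (min_le_right _ _))
      rcases min_cases (b + vGain g s) (charge B B g s) with ⟨he, _⟩ | ⟨he, _⟩ <;>
        rw [he] at ih
      · have := min_le_left (b + vGain g (s + 1)) (charge B B g (s + 1))
        linarith
      · have h3 : charge B B g (s + 1) ≤ charge B B g s + g s := min_le_left _ _
        have := min_le_right (b + vGain g (s + 1)) (charge B B g (s + 1))
        linarith

lemma schedule_sum_mono {C : ℕ → ℝ} {n : ℕ} (hS : Schedule C n) {i j : ℕ}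
    (hij : i ≤ j) (hj : j ≤ n) :
    ∑ t ∈ Finset.range (i + 1), C t ≤ ∑ t ∈ Finset.range (j + 1), C t :=
  Finset.sum_le_sum_of_subset_of_nonneg
    (Finset.range_subset_range.2 (Nat.succ_le_succ hij))
    (fun t ht _ => hS.2 t (by have := Finset.mem_range.1 ht; omega))

lemma schedule_sum_nonneg {C : ℕ → ℝ} {n : ℕ} (hS : Schedule C n) {i : ℕ} (hi : i ≤ n) :
    0 ≤ ∑ t ∈ Finset.range (i + 1), C t := by
  have h0 : ∑ t ∈ Finset.range (0 + 1), C t = 0 := by simp [hS.1]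
  have := schedule_sum_mono hS (Nat.zero_le i) hi
  linarith

lemma vGain_eq_cGain_add {g C : ℕ → ℝ} (i : ℕ) :
    vGain g i = cGain g C i + ∑ t ∈ Finset.range (i + 1), C t := by
  simp [cGain]

/-- Facts about a monotone path `Q` with nonnegative schedule gain. -/
lemma q_facts {B : ℝ} {g C : ℕ → ℝ} {n : ℕ} (hS : Schedule C n)
    (hm : MonotoneC B g C n) (hg : 0 ≤ cGain g C n) :
    ∀ i, i ≤ n → 0 ≤ vGain g i ∧ vGain g i ≤ vGain g n := by
  intro i hi
  have hSi : 0 ≤ ∑ t ∈ Finset.range (i + 1), C t := schedule_sum_nonneg hS hi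
  have hSmono := schedule_sum_mono hS hi le_rfl
  have hvi := vGain_eq_cGain_add (g := g) (C := C) i
  have hvn := vGain_eq_cGain_add (g := g) (C := C) n
  rcases hm with ⟨_, h⟩ | ⟨_, h⟩
  · obtain ⟨h1, h2⟩ := h i hi
    constructor <;> linarith
  · obtain ⟨h1, h2⟩ := h i hi
    constructor <;> linarith

/-- Lower bound on the end charge of a monotone path traversed from full battery. -/
lemma p_charge_lower {B : ℝ} {g C : ℕ → ℝ} {n : ℕ} (hS : Schedule C n)
    (hm : MonotoneC B g C n) :
    B - max 0 (-(cGain g C n)) ≤ charge B B g n := by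
  set D : ℝ := (∑ t ∈ Finset.range (n + 1), C t) + max 0 (cGain g C n) with hDdef
  have hD0 : 0 ≤ D :=
    add_nonneg (schedule_sum_nonneg hS le_rfl) (le_max_left _ _)
  have hD : ∀ j, 1 ≤ j → j ≤ n → vGain g j ≤ D := by
    intro j _ hj
    have hv := vGain_eq_cGain_add (g := g) (C := C) j
    have hSmono := schedule_sum_mono hS hj le_rfl
    have hc : cGain g C j ≤ max 0 (cGain g C n) := by
      rcases hm with ⟨_, h⟩ | ⟨_, h⟩
      · exact (h j hj).2.trans (le_max_right _ _)
      · exact (h j hj).2.trans (le_max_left _ _)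
    rw [hDdef]; linarith
  have := charge_lower (le_refl B) hD n le_rfl
  have hmin : B + vGain g n - D ≤ charge B B g n := by
    have h1 := min_le_right (B + vGain g n) (B + vGain g n - D)
    have h2 : min (B + vGain g n) (B + vGain g n - D) = B + vGain g n - D := by
      apply min_eq_right; linarith
    rw [h2] at this; exact this
  have hv := vGain_eq_cGain_add (g := g) (C := C) n
  have : B + cGain g C n - max 0 (cGain g C n) ≤ charge B B g n := by
    rw [hDdef] at hmin; linarith
  rcases le_total (cGain g C n) 0 with h | h
  · rw [max_eq_left h, max_eq_right (by linarith)] at *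
    linarith
  · rw [max_eq_right h, max_eq_left (by linarith)] at *
    linarith

/-- In a finite directed graph, if there is a walk `P` from `x` to `y` whose
induced path is monotone with respect to a schedule `C₁`, and a walk `Q` from `y` to `z`
whose induced path is monotone with respect to a schedule `C₂` with `g^{C₂}(Q) ≥ 0` and
`g^{C₁}(P) + g^{C₂}(Q) ≥ 0`, then there is a walk `W` from `x` to `z` with `α_B(W) = B`. -/
theorem full_to_full {V : Type*} [Fintype V] (A : V → V → Prop) (g : V → V → ℝ)
    (B : ℝ) (hB : 0 < B) (x y z : V)
    (wP : ℕ → V) (ℓP : ℕ) (hWP : IsWalk A wP ℓP x y)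
    (C₁ : ℕ → ℝ) (hC₁ : Schedule C₁ ℓP)
    (hPmono : MonotoneC B (walkGains g wP) C₁ ℓP)
    (wQ : ℕ → V) (ℓQ : ℕ) (hWQ : IsWalk A wQ ℓQ y z)
    (C₂ : ℕ → ℝ) (hC₂ : Schedule C₂ ℓQ)
    (hQmono : MonotoneC B (walkGains g wQ) C₂ ℓQ)
    (hgQ : 0 ≤ cGain (walkGains g wQ) C₂ ℓQ)
    (hsum : 0 ≤ cGain (walkGains g wP) C₁ ℓP + cGain (walkGains g wQ) C₂ ℓQ) :
    ∃ w ℓ, IsWalk A w ℓ x z ∧ alpha B B (walkGains g w) ℓ = ((B : ℝ) : EReal) := by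
  classical
  obtain ⟨hP0, hPend, hParc⟩ := hWP
  obtain ⟨hQ0, hQend, hQarc⟩ := hWQ
  set gP := walkGains g wP with hgPdef
  set gQ := walkGains g wQ with hgQdef
  set w : ℕ → V := fun t => if t < ℓP then wP t else wQ (t - ℓP) with hwdef
  set h := walkGains g w with hhdef
  -- identification of vertices of the concatenated walk
  have hwP : ∀ t, t ≤ ℓP → w t = wP t := by
    intro t ht
    rcases lt_or_eq_of_le ht with ht' | ht'
    · simp [hwdef, ht']
    · subst ht'
      simp [hwdef, hPend, hQ0]
  have hwQ : ∀ s, w (ℓP + s) = wQ s := by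
    intro s
    have : ¬ ℓP + s < ℓP := by omega
    simp [hwdef, this]
  -- identification of gains
  have hgp : ∀ t, t < ℓP → h t = gP t := by
    intro t ht
    show g (w t) (w (t + 1)) = g (wP t) (wP (t + 1))
    rw [hwP t ht.le, hwP (t + 1) ht]
  have hgq : ∀ s, h (ℓP + s) = gQ s := by
    intro s
    show g (w (ℓP + s)) (w (ℓP + s + 1)) = g (wQ s) (wQ (s + 1))
    have : ℓP + s + 1 = ℓP + (s + 1) := rfl
    rw [hwQ s, this, hwQ (s + 1)]
  -- traversability
  have hPT : Feasible B B gP ℓP := by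
    rcases hPmono with hp | hp <;> exact hp.1
  have hQT : Feasible B B gQ ℓQ := by
    rcases hQmono with hq | hq <;> exact hq.1
  -- charge along the concatenation
  set bP := charge B B gP ℓP with hbPdef
  have hseg : ∀ i, i ≤ ℓP → charge B B h i = charge B B gP i := by
    intro i hi
    exact charge_congr i (fun t ht => hgp t (lt_of_lt_of_le ht hi))
  have hQpart : ∀ s, charge B B h (ℓP + s) = charge B bP gQ s := by
    intro s
    rw [charge_add ℓP s]
    have hfun : (fun t => h (ℓP + t)) = gQ := funext fun t => hgq t
    rw [hfun, hseg ℓP le_rfl]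
  have hbP_le : bP ≤ B := charge_le le_rfl ℓP
  have hbP_nonneg : 0 ≤ bP := charge_nonneg hB.le hB.le hPT ℓP le_rfl
  have hbP_ge : B - max 0 (-(cGain gP C₁ ℓP)) ≤ bP := p_charge_lower hC₁ hPmono
  -- facts about Q's vertex gains
  have hQfacts := q_facts hC₂ hQmono hgQ
  have hQv : cGain gQ C₂ ℓQ ≤ vGain gQ ℓQ := by
    have := vGain_eq_cGain_add (g := gQ) (C := C₂) ℓQ
    have := schedule_sum_nonneg hC₂ (le_refl ℓQ)
    linarith
  have hkey : B ≤ bP + vGain gQ ℓQ := by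
    have h1 : max 0 (-(cGain gP C₁ ℓP)) ≤ cGain gQ C₂ ℓQ :=
      max_le hgQ (by linarith)
    linarith
  -- final charge equals B
  have hfinal : charge B bP gQ ℓQ = B := by
    have hD : ∀ j, 1 ≤ j → j ≤ ℓQ → vGain gQ j ≤ vGain gQ ℓQ :=
      fun j _ hj => (hQfacts j hj).2
    have hlow := charge_lower hbP_le hD ℓQ le_rfl
    have hmin : min (bP + vGain gQ ℓQ) (B + vGain gQ ℓQ - vGain gQ ℓQ)
        ≤ charge B bP gQ ℓQ := hlow
    have hge : B ≤ charge B bP gQ ℓQ := by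
      rcases min_cases (bP + vGain gQ ℓQ) (B + vGain gQ ℓQ - vGain gQ ℓQ) with
        ⟨he, _⟩ | ⟨he, _⟩ <;> rw [he] at hmin <;> linarith
    exact le_antisymm (charge_le hbP_le ℓQ) hge
  -- feasibility of the concatenation
  have hfeas : Feasible B B h (ℓP + ℓQ) := by
    intro i hi
    rcases lt_or_ge i ℓP with hiP | hiP
    · rw [hseg i hiP.le, hgp i hiP]
      exact hPT i hiP
    · obtain ⟨s, rfl⟩ : ∃ s, i = ℓP + s := ⟨i - ℓP, by omega⟩
      have hs : s < ℓQ := by omega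
      rw [hQpart s, hgq s]
      have hmono := charge_mono_init (g := gQ) hbP_le s
      rcases min_cases (bP + vGain gQ s) (charge B B gQ s) with ⟨he, _⟩ | ⟨he, _⟩ <;>
        rw [he] at hmono
      · have hv : 0 ≤ vGain gQ (s + 1) := (hQfacts (s + 1) hs).1
        have := vGain_succ gQ s
        linarith
      · have := hQT s hs
        linarith
  refine ⟨w, ℓP + ℓQ, ⟨?_, ?_, ?_⟩, ?_⟩
  · rcases Nat.eq_zero_or_pos ℓP with h0 | h0
    · rw [hwP 0 (by omega)]
      rw [hP0]
    · simp [hwdef, h0, hP0]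
  · have := hwQ ℓQ
    rw [this, hQend]
  · intro t ht
    rcases lt_or_ge t ℓP with htP | htP
    · rw [hwP t htP.le, hwP (t + 1) htP]
      exact hParc t htP
    · obtain ⟨s, rfl⟩ : ∃ s, t = ℓP + s := ⟨t - ℓP, by omega⟩
      have hs : s < ℓQ := by omega
      have e1 : ℓP + s + 1 = ℓP + (s + 1) := rfl
      rw [hwQ s, e1, hwQ (s + 1)]
      exact hQarc s hs
  · have hc : charge B B h (ℓP + ℓQ) = B := by
      rw [hQpart ℓQ, hfinal]
    rw [alpha, if_pos hfeas, hc]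

end

end EV
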